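/- Let μ, ν be weights in a standard parabolic proper face F_I of the weight polytope with μ < ν. Then there exist simple roots α_{i_1},…,α_{i_k} with indices in the complement of I such that ν = μ + α_{i_1} + ⋯ + α_{i_k} and each partial sum μ + α_{i_1} + ⋯ + α_{i_s} (1 ≤ s ≤ k) is a weight in F_I. -/

import Mathlib

open RealInnerProductSpace

noncomputable section

variable {E : Type*} [NormedAddCommGroup E] [InnerProductSpace ℝ E] [FiniteDimensional ℝ E]

/-- Reflection in the hyperplane orthogonal to `β`. -/
def sref (β : E) : E ≃ₗᵢ[ℝ] E := Submodule.reflection (ℝ ∙ β)ᗮ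

/-- Data of a system of simple roots of a (crystallographic, irreducible) root system:
the simple roots form a basis of the euclidean space, Cartan integers are integral,
distinct simple roots have nonpositive inner products, and the Dynkin diagram is connected. -/
structure RootData (n : ℕ) (E : Type*) [NormedAddCommGroup E] [InnerProductSpace ℝ E] where
  α : Fin n → E
  b : Module.Basis (Fin n) ℝ E
  hb : ∀ i, b i = α i
  cartan : ∀ i j, ∃ z : ℤ, (z : ℝ) * ⟪α j, α j⟫ = 2 * ⟪α i, α j⟫
  offdiag : ∀ i j : Fin n, i ≠ j → ⟪α i, α j⟫ ≤ 0
  conn : ∀ i j : Fin n, Relation.ReflTransGen (fun a b => a ≠ b ∧ ⟪α a, α b⟫ ≠ 0) i j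

namespace RootData

variable {n : ℕ} (S : RootData n E)

/-- The simple reflections. -/
def s (i : Fin n) : E ≃ₗᵢ[ℝ] E := sref (S.α i)

/-- The Weyl group, generated by the simple reflections. -/
def W : Subgroup (E ≃ₗᵢ[ℝ] E) := Subgroup.closure (Set.range S.s)

/-- The standard parabolic subgroup generated by the simple reflections indexed by `I`. -/
def WI (I : Set (Fin n)) : Subgroup (E ≃ₗᵢ[ℝ] E) := Subgroup.closure (S.s '' I)

/-- The set of roots:  the Weyl group orbit of the simple roots. -/
def roots : Set E := {β | ∃ w ∈ S.W, ∃ i, β = w (S.α i)}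

/-- `x` is dominant: nonnegative inner product with every simple root. -/
def Dominant (x : E) : Prop := ∀ i, 0 ≤ ⟪x, S.α i⟫

/-- The dominant weight `λ = Σ mᵢ αᵢ` (with nonnegative integer coefficients). -/
def lam (m : Fin n → ℕ) : E := ∑ j, (m j : ℝ) • S.α j

/-- `λ` is an integral weight: `2(λ,αᵢ)/(αᵢ,αᵢ)` is a (nonnegative) integer. -/
def IntegralDom (m : Fin n → ℕ) : Prop :=
  ∀ i, ∃ z : ℕ, (z : ℝ) * ⟪S.α i, S.α i⟫ = 2 * ⟪S.lam m, S.α i⟫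

/-- The Weyl group orbit of a point. -/
def orbit (x : E) : Set E := (fun w : E ≃ₗᵢ[ℝ] E => w x) '' (S.W : Set (E ≃ₗᵢ[ℝ] E))

/-- The weight polytope: the convex hull of the Weyl group orbit of `λ`. -/
def poly (m : Fin n → ℕ) : Set E := convexHull ℝ (S.orbit (S.lam m))

/-- `c μ i` is the coefficient of `αᵢ` when `μ` is expressed in the basis of simple roots. -/
def c (μ : E) (i : Fin n) : ℝ := S.b.repr μ i

/-- The set of weights `P(λ)`:  points of the weight polytope lying in the root lattice. -/
def Pw (m : Fin n → ℕ) : Set E := {μ ∈ S.poly m | ∀ i, ∃ z : ℤ, S.c μ i = z}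

/-- `P_I`: the weights whose `αᵢ`-coefficient equals `mᵢ` for all `i ∈ I`. -/
def P_ (m : Fin n → ℕ) (I : Set (Fin n)) : Set E :=
  {μ ∈ S.Pw m | ∀ i ∈ I, S.c μ i = m i}

/-- The standard parabolic face `F_I` of the weight polytope. -/
def F_ (m : Fin n → ℕ) (I : Set (Fin n)) : Set E :=
  {x ∈ S.poly m | ∀ i ∈ I, S.c x i = m i}

/-- The dominance order: `μ ≤ ν` iff `ν - μ` is a nonnegative integral sum of simple roots. -/
def wle (μ ν : E) : Prop := ∃ a : Fin n → ℕ, ν - μ = ∑ i, (a i : ℝ) • S.α i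

/-- Adjacency in the extended Dynkin diagram with extra node `-λ` (encoded as `none`). -/
def adj (m : Fin n → ℕ) : Option (Fin n) → Option (Fin n) → Prop
  | none, none => False
  | none, some j => 0 < ⟪S.lam m, S.α j⟫
  | some i, none => 0 < ⟪S.lam m, S.α i⟫
  | some i, some j => i ≠ j ∧ ⟪S.α i, S.α j⟫ ≠ 0

/-- One step in the extended Dynkin diagram, staying within the vertices `{-λ} ∪ {αₖ : k ∈ K}`. -/
def within (m : Fin n → ℕ) (K : Set (Fin n)) (a b : Option (Fin n)) : Prop :=
  S.adj m a b ∧ (∀ i, a = some i → i ∈ K) ∧ (∀ i, b = some i → i ∈ K)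

/-- `I̅⁰`: indices of the simple roots in the connected component of `-λ` in the subdiagram
of the extended Dynkin diagram on the complement of `I` together with `-λ`. -/
def comp0 (m : Fin n → ℕ) (I : Set (Fin n)) : Set (Fin n) :=
  {j | j ∉ I ∧ Relation.ReflTransGen (S.within m Iᶜ) none (some j)}

/-- The subdiagram of the extended Dynkin diagram on `{-λ} ∪ {αₖ : k ∈ K}` is connected. -/
def ConnWith (m : Fin n → ℕ) (K : Set (Fin n)) : Prop :=
  ∀ j ∈ K, Relation.ReflTransGen (S.within m K) none (some j)

/-- `ω` is the `i`-th fundamental coweight: `(ω, αⱼ) = δᵢⱼ`. -/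
def IsCoweight (i : Fin n) (ω : E) : Prop :=
  ∀ j, ⟪ω, S.α j⟫ = if j = i then 1 else 0

end RootData

variable {n : ℕ}

namespace RootData

variable (S : RootData n E)

lemma alpha_ne (i : Fin n) : S.α i ≠ 0 := S.hb i ▸ S.b.ne_zero i

lemma inner_self_pos' (i : Fin n) : 0 < ⟪S.α i, S.α i⟫ := by
  rw [real_inner_self_eq_norm_sq]
  have := norm_pos_iff.2 (S.alpha_ne i)
  positivity

lemma s_apply' (i : Fin n) (x : E) :
    S.s i x = x - (2 * ⟪x, S.α i⟫ / ⟪S.α i, S.α i⟫) • S.α i := by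
  have hd : ⟪S.α i, S.α i⟫ ≠ 0 := ne_of_gt (S.inner_self_pos' i)
  rw [show S.s i = Submodule.reflection ((ℝ ∙ S.α i)ᗮ) from rfl,
    Submodule.reflection_orthogonal_apply, Submodule.reflection_singleton_apply (𝕜 := ℝ) (S.α i) x]
  have hnorm : ((‖S.α i‖ : ℝ) ^ 2) = ⟪S.α i, S.α i⟫ := (real_inner_self_eq_norm_sq _).symm
  simp only [RCLike.ofReal_real_eq_id, id_eq]
  rw [hnorm, real_inner_comm (S.α i) x, neg_sub, two_smul]
  match_scalars <;> field_simp <;> ring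

lemma c_add (x y : E) (i : Fin n) : S.c (x + y) i = S.c x i + S.c y i := by
  simp [c]

lemma c_sub (x y : E) (i : Fin n) : S.c (x - y) i = S.c x i - S.c y i := by
  simp [c]

lemma c_alpha (i j : Fin n) : S.c (S.α i) j = if i = j then 1 else 0 := by
  rw [c, ← S.hb i, S.b.repr_self, Finsupp.single_apply]

lemma c_sum (a : Fin n → ℝ) (i : Fin n) : S.c (∑ j, a j • S.α j) i = a i := by
  have : S.c (∑ j, a j • S.α j) i = ∑ j, a j * S.c (S.α j) i := by
    simp only [c, map_sum, map_smul, Finsupp.coe_finset_sum, Finset.sum_apply,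
      Finsupp.coe_smul, Pi.smul_apply, smul_eq_mul]
  rw [this]
  simp [c_alpha, Finset.sum_ite_eq]

lemma eq_sum_c (x : E) : x = ∑ j, S.c x j • S.α j := by
  conv_lhs => rw [← S.b.sum_repr x]
  exact Finset.sum_congr rfl fun j _ => by rw [c, S.hb]

lemma lattice_int {x : E} (hx : ∀ j, ∃ z : ℤ, S.c x j = z) (i : Fin n) :
    ∃ z : ℤ, (z : ℝ) * ⟪S.α i, S.α i⟫ = 2 * ⟪x, S.α i⟫ := by
  choose z hz using hx
  choose Z hZ using S.cartan
  refine ⟨∑ j, z j * Z j i, ?_⟩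
  have hx' : x = ∑ j, (z j : ℝ) • S.α j := by
    conv_lhs => rw [S.eq_sum_c x]
    exact Finset.sum_congr rfl fun j _ => by rw [hz]
  rw [hx', sum_inner]
  push_cast
  rw [Finset.sum_mul, Finset.mul_sum]
  refine Finset.sum_congr rfl fun j _ => ?_
  rw [real_inner_smul_left]
  calc (z j : ℝ) * (Z j i) * ⟪S.α i, S.α i⟫
      = (z j : ℝ) * ((Z j i) * ⟪S.α i, S.α i⟫) := by ring
    _ = (z j : ℝ) * (2 * ⟪S.α j, S.α i⟫) := by rw [hZ j i]
    _ = 2 * ((z j : ℝ) * ⟪S.α j, S.α i⟫) := by ring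

lemma s_mem_W (i : Fin n) : S.s i ∈ S.W := Subgroup.subset_closure ⟨i, rfl⟩

lemma s_poly (m : Fin n → ℕ) (i : Fin n) {x : E} (hx : x ∈ S.poly m) :
    S.s i x ∈ S.poly m := by
  set f : E →ₗ[ℝ] E := (S.s i).toLinearEquiv.toLinearMap with hf
  have himg : f '' S.orbit (S.lam m) ⊆ S.orbit (S.lam m) := by
    rintro _ ⟨y, ⟨w, hw, rfl⟩, rfl⟩
    exact ⟨S.s i * w, mul_mem (S.s_mem_W i) hw, rfl⟩
  have hmem : f x ∈ convexHull ℝ (f '' S.orbit (S.lam m)) := by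
    rw [← LinearMap.image_convexHull]
    exact Set.mem_image_of_mem _ hx
  exact convexHull_mono himg hmem

lemma sub_alpha_mem_poly (m : Fin n → ℕ) (i : Fin n) {x : E}
    (hx : x ∈ S.poly m) {t : ℝ} (ht : 2 * ⟪x, S.α i⟫ / ⟪S.α i, S.α i⟫ = t)
    (h1 : 1 ≤ t) : x - S.α i ∈ S.poly m := by
  have hconv : Convex ℝ (S.poly m) := convex_convexHull ℝ _
  have hy : S.s i x ∈ S.poly m := S.s_poly m i hx
  have ht0 : (0:ℝ) < t := lt_of_lt_of_le one_pos h1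
  have htne : t ≠ 0 := ne_of_gt ht0
  have key : (1 - 1/t) • x + (1/t) • (S.s i x) = x - S.α i := by
    rw [S.s_apply' i x, ht]
    match_scalars <;> field_simp <;> ring
  rw [← key]
  exact hconv hx hy (by rw [sub_nonneg]; exact (div_le_one ht0).2 h1)
    (by positivity) (by ring)

lemma add_alpha_mem_poly (m : Fin n → ℕ) (i : Fin n) {x : E}
    (hx : x ∈ S.poly m) {t : ℝ} (ht : 2 * ⟪x, S.α i⟫ / ⟪S.α i, S.α i⟫ = t)
    (h1 : t ≤ -1) : x + S.α i ∈ S.poly m := by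
  have hconv : Convex ℝ (S.poly m) := convex_convexHull ℝ _
  have hy : S.s i x ∈ S.poly m := S.s_poly m i hx
  have ht0 : t < 0 := lt_of_le_of_lt h1 (by norm_num)
  have htne : t ≠ 0 := ne_of_lt ht0
  have key : (1 + 1/t) • x + (-(1/t)) • (S.s i x) = x + S.α i := by
    rw [S.s_apply' i x, ht]
    match_scalars <;> field_simp <;> ring
  rw [← key]
  refine hconv hx hy ?_ ?_ (by ring)
  · have : -1 ≤ 1/t := by rw [le_div_iff_of_neg ht0]; linarith
    linarith
  · have : 1/t ≤ 0 := le_of_lt (div_neg_of_pos_of_neg one_pos ht0)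
    linarith

/-- Membership of `ν - αᵢ` in `P_I`, given the polytope part. -/
lemma mem_P_sub (m : Fin n → ℕ) (I : Set (Fin n)) {ν : E} (hν : ν ∈ S.P_ m I)
    (i : Fin n) (hi : i ∉ I) (hpoly : ν - S.α i ∈ S.poly m) :
    ν - S.α i ∈ S.P_ m I := by
  obtain ⟨⟨hp, hz⟩, hm⟩ := hν
  refine ⟨⟨hpoly, fun j => ?_⟩, fun j hj => ?_⟩
  · obtain ⟨z, hzj⟩ := hz j
    refine ⟨z - if i = j then 1 else 0, ?_⟩
    rw [S.c_sub, hzj, S.c_alpha]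
    split <;> push_cast <;> ring
  · have hij : i ≠ j := fun h => hi (h ▸ hj)
    rw [S.c_sub, S.c_alpha, if_neg hij, hm j hj, sub_zero]

lemma mem_P_add (m : Fin n → ℕ) (I : Set (Fin n)) {μ : E} (hμ : μ ∈ S.P_ m I)
    (i : Fin n) (hi : i ∉ I) (hpoly : μ + S.α i ∈ S.poly m) :
    μ + S.α i ∈ S.P_ m I := by
  obtain ⟨⟨hp, hz⟩, hm⟩ := hμ
  refine ⟨⟨hpoly, fun j => ?_⟩, fun j hj => ?_⟩
  · obtain ⟨z, hzj⟩ := hz j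
    refine ⟨z + if i = j then 1 else 0, ?_⟩
    rw [S.c_add, hzj, S.c_alpha]
    split <;> push_cast <;> ring
  · have hij : i ≠ j := fun h => hi (h ▸ hj)
    rw [S.c_add, S.c_alpha, if_neg hij, hm j hj, add_zero]

/-- The key one-step lemma. -/
lemma step (m : Fin n → ℕ) (I : Set (Fin n)) {μ ν : E}
    (hμ : μ ∈ S.P_ m I) (hν : ν ∈ S.P_ m I) (a : Fin n → ℕ)
    (h : ν - μ = ∑ j, (a j : ℝ) • S.α j) (hne : ν ≠ μ) :
    ∃ i, a i ≠ 0 ∧ i ∉ I ∧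
      (μ + S.α i ∈ S.P_ m I ∨ ν - S.α i ∈ S.P_ m I) := by
  have hd : (0:ℝ) < ⟪ν - μ, ν - μ⟫ := by
    rw [real_inner_self_eq_norm_sq]
    have := norm_pos_iff.2 (sub_ne_zero.2 hne)
    positivity
  have hsum : (⟪∑ j, (a j : ℝ) • S.α j, ν - μ⟫ : ℝ)
      = ∑ j, (a j : ℝ) * ⟪S.α j, ν - μ⟫ := by
    rw [sum_inner]
    exact Finset.sum_congr rfl fun j _ => real_inner_smul_left _ _ _
  have hex : ∃ i, 0 < (a i : ℝ) * ⟪S.α i, ν - μ⟫ := by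
    by_contra hc
    push_neg at hc
    have h1 : (⟪∑ j, (a j : ℝ) • S.α j, ν - μ⟫ : ℝ) ≤ 0 :=
      hsum ▸ Finset.sum_nonpos fun j _ => hc j
    rw [← h] at h1
    linarith
  obtain ⟨i, hi⟩ := hex
  have hai : a i ≠ 0 := by
    intro h0; rw [h0] at hi; simp at hi
  have hIi : i ∉ I := by
    intro hiI
    have hcν := hν.2 i hiI
    have hcμ := hμ.2 i hiI
    have : S.c (ν - μ) i = 0 := by rw [S.c_sub, hcν, hcμ, sub_self]
    rw [h, S.c_sum] at this
    exact hai (Nat.cast_eq_zero.1 this)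
  have hinner : ⟪μ, S.α i⟫ < ⟪ν, S.α i⟫ := by
    have h1 : 0 < ⟪S.α i, ν - μ⟫ := by
      rcases (mul_pos_iff.1 hi) with ⟨_, hh⟩ | ⟨hh, _⟩
      · exact hh
      · exact absurd hh (not_lt.2 (Nat.cast_nonneg _))
    rw [inner_sub_right] at h1
    have e1 := real_inner_comm (S.α i) ν
    have e2 := real_inner_comm (S.α i) μ
    linarith
  obtain ⟨zν, hzν⟩ := S.lattice_int hν.1.2 i
  obtain ⟨zμ, hzμ⟩ := S.lattice_int hμ.1.2 i
  have hαα : (0:ℝ) < ⟪S.α i, S.α i⟫ := S.inner_self_pos' i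
  have hzlt : zμ < zν := by
    have hmul : (zμ : ℝ) * ⟪S.α i, S.α i⟫ < (zν : ℝ) * ⟪S.α i, S.α i⟫ := by
      rw [hzν, hzμ]; linarith
    exact_mod_cast lt_of_mul_lt_mul_right hmul (le_of_lt hαα)
  refine ⟨i, hai, hIi, ?_⟩
  by_cases hc : 1 ≤ zν
  · right
    have ht : 2 * ⟪ν, S.α i⟫ / ⟪S.α i, S.α i⟫ = (zν : ℝ) := by
      rw [← hzν]; exact mul_div_cancel_right₀ _ (ne_of_gt hαα)
    exact S.mem_P_sub m I hν i hIi
      (S.sub_alpha_mem_poly m i hν.1.1 ht (by exact_mod_cast hc))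
  · left
    push_neg at hc
    have hzμ1 : zμ ≤ -1 := by omega
    have ht : 2 * ⟪μ, S.α i⟫ / ⟪S.α i, S.α i⟫ = (zμ : ℝ) := by
      rw [← hzμ]; exact mul_div_cancel_right₀ _ (ne_of_gt hαα)
    exact S.mem_P_add m I hμ i hIi
      (S.add_alpha_mem_poly m i hμ.1.1 ht (by exact_mod_cast hzμ1))

/-- The chain lemma, list version. -/
lemma chain_list (m : Fin n → ℕ) (I : Set (Fin n)) :
    ∀ (N : ℕ) (a : Fin n → ℕ), (∑ j, a j) = N → ∀ μ ν : E, μ ∈ S.P_ m I → ν ∈ S.P_ m I →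
    ν - μ = ∑ j, (a j : ℝ) • S.α j →
    ∃ l : List (Fin n), (∀ i ∈ l, i ∉ I) ∧ ν = μ + (l.map S.α).sum ∧
      ∀ l₁, l₁ <+: l → l₁ ≠ [] → μ + (l₁.map S.α).sum ∈ S.P_ m I := by
  intro N
  induction N with
  | zero =>
    intro a ha μ ν hμ hν h
    have h0 : ∀ j, a j = 0 := fun j =>
      (Finset.sum_eq_zero_iff.1 ha) j (Finset.mem_univ j)
    have : ν - μ = 0 := by
      rw [h]; exact Finset.sum_eq_zero fun j _ => by rw [h0 j]; simp
    refine ⟨[], by simp, by simp [sub_eq_zero.1 this], fun l₁ hl₁ hne => ?_⟩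
    exact absurd (List.prefix_nil.1 hl₁) hne
  | succ N ih =>
    intro a ha μ ν hμ hν h
    have hne : ν ≠ μ := by
      intro he
      rw [he, sub_self] at h
      have h0 : ∀ j, a j = 0 := by
        intro j
        have h1 : (a j : ℝ) = 0 := by
          rw [← S.c_sum (fun k => ((a k : ℝ))) j, ← h]
          simp [c]
        exact_mod_cast h1
      have : ∑ j, a j = 0 := Finset.sum_eq_zero fun j _ => h0 j
      omega
    obtain ⟨i, hai, hiI, hcase⟩ := S.step m I hμ hν a h hne
    set a' : Fin n → ℕ := Function.update a i (a i - 1) with ha'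
    have hsum' : (∑ j, a' j) = N := by
      have h1 : ∑ j, a' j = (a i - 1) + ∑ j ∈ Finset.univ.erase i, a j := by
        rw [ha', Finset.sum_update_of_mem (Finset.mem_univ i),
          Finset.sdiff_singleton_eq_erase]
      have h2 : a i + ∑ j ∈ Finset.univ.erase i, a j = N + 1 := by
        rw [Finset.add_sum_erase _ _ (Finset.mem_univ i), ha]
      omega
    have hreal : ∀ x y : E, y - x = ν - μ - S.α i → y - x = ∑ j, (a' j : ℝ) • S.α j := by
      intro x y hxy
      rw [hxy, h]
      have h1 : ∑ j, (a' j : ℝ) • S.α j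
          = ((a i : ℝ) - 1) • S.α i + ∑ j ∈ Finset.univ.erase i, (a j : ℝ) • S.α j := by
        rw [← Finset.add_sum_erase _ (fun j => (a' j : ℝ) • S.α j) (Finset.mem_univ i)]
        congr 1
        · rw [ha', Function.update_self, Nat.cast_sub (Nat.one_le_iff_ne_zero.2 hai)]
          norm_num
        · exact Finset.sum_congr rfl fun j hj =>
            by rw [ha', Function.update_of_ne (Finset.mem_erase.1 hj).1]
      have h2 : ∑ j, (a j : ℝ) • S.α j
          = (a i : ℝ) • S.α i + ∑ j ∈ Finset.univ.erase i, (a j : ℝ) • S.α j := by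
        rw [← Finset.add_sum_erase _ (fun j => (a j : ℝ) • S.α j) (Finset.mem_univ i)]
      rw [h1, h2, sub_smul, one_smul]
      abel
    rcases hcase with hcase | hcase
    · -- go up from μ
      obtain ⟨l', hl'I, hl'sum, hl'pre⟩ := ih a' hsum' (μ + S.α i) ν hcase hν
        (hreal (μ + S.α i) ν (by abel))
      refine ⟨i :: l', ?_, ?_, ?_⟩
      · intro j hj
        rcases List.mem_cons.1 hj with rfl | hj
        · exact hiI
        · exact hl'I j hj
      · rw [hl'sum]; simp; abel
      · intro l₁ hl₁ hne₁
        match l₁, hne₁ with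
        | j :: l₁', _ =>
          obtain ⟨rfl, hpre⟩ := List.cons_prefix_cons.1 hl₁
          rcases eq_or_ne l₁' [] with rfl | hne₂
          · simpa using hcase
          · have := hl'pre l₁' hpre hne₂
            have heq : μ + ((j :: l₁').map S.α).sum = μ + S.α j + (l₁'.map S.α).sum := by
              simp; abel
            rw [heq]
            exact this
    · -- come down from ν
      obtain ⟨l', hl'I, hl'sum, hl'pre⟩ := ih a' hsum' μ (ν - S.α i) hμ hcase
        (hreal μ (ν - S.α i) (by abel))
      refine ⟨l' ++ [i], ?_, ?_, ?_⟩
      · intro j hj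
        rcases List.mem_append.1 hj with hj | hj
        · exact hl'I j hj
        · rw [List.mem_singleton.1 hj]; exact hiI
      · have : ν = (ν - S.α i) + S.α i := by abel
        rw [this, hl'sum]; simp; abel
      · intro l₁ hl₁ hne₁
        rcases eq_or_ne l₁ (l' ++ [i]) with rfl | hne₂
        · have : μ + (((l' ++ [i]).map S.α)).sum = ν := by
            have : ν = (ν - S.α i) + S.α i := by abel
            rw [this, hl'sum]; simp; abel
          rw [this]; exact hν
        · have hlen : l₁.length ≤ l'.length := by
            have h1 := hl₁.length_le
            rw [List.length_append, List.length_singleton] at h1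
            rcases Nat.lt_or_ge l₁.length (l'.length + 1) with h2 | h2
            · omega
            · exact absurd (List.IsPrefix.eq_of_length hl₁ (by
                rw [List.length_append, List.length_singleton]; omega)) hne₂
          have hpre : l₁ <+: l' := by
            have he : l₁ = l'.take l₁.length := by
              conv_lhs => rw [List.prefix_iff_eq_take.mp hl₁]
              rw [List.take_append_of_le_length hlen]
            rw [he]
            exact List.take_prefix _ _
          exact hl'pre l₁ hpre hne₁


/-- Partial sums of a list as sums over `Finset.range`. -/
lemma sum_take_eq_range (L : List E) : ∀ m, m ≤ L.length →
    (L.take m).sum = ∑ j ∈ Finset.range m, L.getD j 0 := by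
  intro m
  induction m with
  | zero => intro _; simp
  | succ k ih =>
    intro h
    have hk : k < L.length := h
    rw [Finset.sum_range_succ, ← ih (le_of_lt hk), List.sum_take_succ L k hk]
    congr 1
    exact (List.getD_eq_getElem L 0 hk).symm

lemma sum_map_get {A : Type*} (f : A → E) : ∀ l : List A,
    (l.map f).sum = ∑ s : Fin l.length, f (l.get s)
  | [] => by simp
  | (x :: xs) => by
    rw [List.map_cons, List.sum_cons, sum_map_get f xs]
    exact (Fin.sum_univ_succ fun s : Fin (xs.length + 1) => f ((x :: xs).get s)).symm

lemma filter_le_sum {k : ℕ} (g : ℕ → E) (s : Fin k) :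
    ∑ t ∈ Finset.univ.filter (fun t => t ≤ s), g (t : Fin k).1
      = ∑ j ∈ Finset.range (s.1 + 1), g j := by
  refine Finset.sum_bij' (fun t _ => (t : Fin k).1)
    (fun j hj => (⟨j, lt_of_le_of_lt (Nat.lt_succ_iff.1 (Finset.mem_range.1 hj)) s.2⟩ : Fin k))
    ?_ ?_ ?_ ?_ ?_
  · intro t ht
    rw [Finset.mem_range, Nat.lt_succ_iff]
    exact (Finset.mem_filter.1 ht).2
  · intro j hj
    rw [Finset.mem_filter]
    exact ⟨Finset.mem_univ _, Nat.lt_succ_iff.1 (Finset.mem_range.1 hj)⟩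
  · intro t ht; rfl
  · intro j hj; rfl
  · intro t ht; rfl

end RootData

/-- if `μ < ν` are weights in a standard parabolic proper face `F_I`, then
`ν = μ + α_{i₁} + ⋯ + α_{i_k}` with all indices outside `I` and all partial sums weights
in `F_I`. -/
theorem chain_lemma (S : RootData n E) (m : Fin n → ℕ)
    (hdom : S.Dominant (S.lam m)) (hint : S.IntegralDom m) (I : Set (Fin n))
    (hproper : S.F_ m I ≠ S.poly m)
    (μ ν : E) (hμ : μ ∈ S.P_ m I) (hν : ν ∈ S.P_ m I)
    (hlt : S.wle μ ν) (hne : μ ≠ ν) :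
    ∃ (k : ℕ) (f : Fin k → Fin n), (∀ s, f s ∉ I) ∧
      ν = μ + ∑ s, S.α (f s) ∧
      ∀ s : Fin k, μ + ∑ t ∈ Finset.univ.filter (fun t => t ≤ s), S.α (f t) ∈ S.P_ m I := by
  obtain ⟨a, ha⟩ := hlt
  obtain ⟨l, hlI, hlsum, hlpre⟩ := S.chain_list m I (∑ j, a j) a rfl μ ν hμ hν ha
  refine ⟨l.length, fun s => l.get s, fun s => hlI _ (l.get_mem _), ?_, ?_⟩
  · rw [hlsum]
    congr 1
    exact RootData.sum_map_get S.α l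
  · intro s
    have hkey : ∑ t ∈ Finset.univ.filter (fun t => t ≤ s), S.α (l.get t)
        = ((l.take (s.1 + 1)).map S.α).sum := by
      have h1 : ∀ t : Fin l.length, S.α (l.get t) = (l.map S.α).getD t.1 0 := by
        intro t
        have ht : t.1 < (l.map S.α).length := by
          rw [List.length_map]; exact t.2
        rw [List.getD_eq_getElem _ 0 ht, List.getElem_map]
        rfl
      rw [Finset.sum_congr rfl (fun t _ => h1 t),
        RootData.filter_le_sum (fun j => (l.map S.α).getD j 0) s,
        ← RootData.sum_take_eq_range (l.map S.α) (s.1 + 1)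
          (by rw [List.length_map]; exact s.2),
        List.map_take]
    rw [hkey]
    refine hlpre _ (List.take_prefix _ _) ?_
    have hlen : (l.take (s.1 + 1)).length = s.1 + 1 := by
      rw [List.length_take]
      have := s.2
      omega
    intro hnil
    rw [hnil] at hlen
    simp at hlen
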